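/- Let p : ℝ^d → ℝ^m be a polynomial map given by polynomials p₁,…,p_m and let X : [0,L] → ℝ^d be a piecewise continuously differentiable path such that p_i(X(t)) = 0 for all i = 1,…,m and all t ∈ [0,L] (i.e. X lies in the zero set of the ideal I_p = ⟨p₁,…,p_m⟩). Define p̃(y) = p(y + X(0)) − p(X(0)). Then M_{p̃}^*(σ(X)) = e; that is, ⟨σ(X), M_{p̃}(w)⟩ = 0 for every non-empty word w in the alphabet {1,…,m}, and ⟨σ(X), M_{p̃}(e)⟩ = 1. -/

import Mathlib

noncomputable section

open MeasureTheory

/-- Words in the alphabet `{1,…,d}`. -/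
abbrev Word (d : ℕ) := List (Fin d)

/-- `T(ℝ^d)`: the real vector space with basis the words in `{1,…,d}`. -/
abbrev Tens (d : ℕ) := Word d →₀ ℝ

namespace SigPaper

variable {d m s : ℕ}

/-- The basis word `w` as an element of `T(ℝ^d)`. -/
def wordT (w : Word d) : Tens d := Finsupp.single w 1

/-- The shuffle product of two words. -/
def shuffleWord : Word d → Word d → Tens d
  | [], v => Finsupp.single v 1
  | u, [] => Finsupp.single u 1
  | a :: u, b :: v =>
      Finsupp.mapDomain (fun w => a :: w) (shuffleWord u (b :: v)) +
      Finsupp.mapDomain (fun w => b :: w) (shuffleWord (a :: u) v)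
  termination_by u v => u.length + v.length
  decreasing_by all_goals simp +arith +decide

/-- The shuffle product `⧢` on `T(ℝ^d)`, the bilinear extension of the shuffle of words. -/
def shuffle (x y : Tens d) : Tens d :=
  x.sum fun u a => y.sum fun v b => (a * b) • shuffleWord u v

/-- The operator appending the letter `i` at the end of every word (`T_i^+`). -/
def appendLetter (i : Fin d) (x : Tens d) : Tens d :=
  Finsupp.mapDomain (fun w => w ++ [i]) x

/-- The right half-shuffle of two words: `w ≻ (v∘i) = (w ⧢ v)∘i` (zero if the right word
is empty). -/
def halfShuffleWord (u v : Word d) : Tens d :=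
  match v.getLast? with
  | none => 0
  | some i => appendLetter i (shuffleWord u v.dropLast)

/-- The right half-shuffle `≻`, extended bilinearly. -/
def halfShuffle (x y : Tens d) : Tens d :=
  x.sum fun u a => y.sum fun v b => (a * b) • halfShuffleWord u v

/-- The letter-appending operator `T_i^+`. -/
def Tplus (i : Fin d) : Tens d → Tens d := appendLetter i

/-- `T_i^-` on a word: removes the last letter if it equals `i`, otherwise `0`. -/
def TminusWord (i : Fin d) (w : Word d) : Tens d :=
  match w.getLast? with
  | none => 0
  | some j => if j = i then Finsupp.single w.dropLast 1 else 0

/-- The letter-removing operator `T_i^-`. -/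
def Tminus (i : Fin d) (x : Tens d) : Tens d := x.sum fun w a => a • TminusWord i w

/-- The single-letter word `i` in `T(ℝ^d)`. -/
def letterT (i : Fin d) : Tens d := Finsupp.single [i] 1

/-- Shuffle powers `x^{⧢ n}`. -/
def shufflePow (x : Tens d) : ℕ → Tens d
  | 0 => Finsupp.single [] 1
  | n + 1 => shuffle (shufflePow x n) x

/-- Shuffle product of a list of elements. -/
def shuffleList : List (Tens d) → Tens d
  | [] => Finsupp.single [] 1
  | x :: xs => shuffle x (shuffleList xs)

/-- Image of the monomial `x^t` under `φ_d`: the shuffle product of its letters. -/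
def phiMon (t : Fin d →₀ ℕ) : Tens d :=
  shuffleList ((List.finRange d).map fun i => shufflePow (letterT i) (t i))

/-- The embedding `φ_d : ℝ[x₁,…,x_d] → (T(ℝ^d), ⧢)` sending the monomial
`x_{i₁}⋯x_{i_l}` to `i₁ ⧢ ⋯ ⧢ i_l`. -/
def phi (f : MvPolynomial (Fin d) ℝ) : Tens d :=
  f.support.sum fun t => f.coeff t • phiMon t

/-- A polynomial map `p : ℝ^d → ℝ^m`, given by `m` polynomials in `d` variables. -/
abbrev PolyMap (d m : ℕ) := Fin m → MvPolynomial (Fin d) ℝ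

/-- `k_p^{ij} = φ_d(∂p_i/∂x_j) ∈ T(ℝ^d)`. -/
def kP (p : PolyMap d m) (i : Fin m) (j : Fin d) : Tens d :=
  phi (MvPolynomial.pderiv j (p i))

/-- Auxiliary: `M_p` on reversed words, so that `M_p(e) = e` and
`M_p(w∘i) = Σ_j (M_p(w) ⧢ k_p^{ij})∘j`. -/
def MpRev (p : PolyMap d m) : List (Fin m) → Tens d
  | [] => Finsupp.single [] 1
  | i :: w => ∑ j : Fin d, appendLetter j (shuffle (MpRev p w) (kP p i j))

/-- `M_p` on a word. -/
def MpWord (p : PolyMap d m) (w : Word m) : Tens d := MpRev p w.reverse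

/-- The linear map `M_p : T(ℝ^m) → T(ℝ^d)`. -/
def Mp (p : PolyMap d m) (x : Tens m) : Tens d := x.sum fun w a => a • MpWord p w

/-- `X : [0,L] → ℝ^d` is piecewise continuously differentiable: there is a partition
`0 = t₀ ≤ t₁ ≤ ⋯ ≤ t_n = L` such that `X` is `C¹` on each subinterval. -/
def PiecewiseC1 (X : ℝ → Fin d → ℝ) (L : ℝ) : Prop :=
  ∃ (n : ℕ) (t : Fin (n + 1) → ℝ), Monotone t ∧ t 0 = 0 ∧ t (Fin.last n) = L ∧
    ∀ k : Fin n, ContDiffOn ℝ 1 X (Set.Icc (t k.castSucc) (t k.succ))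

/-- Iterated-integral signature coefficients, on reversed words:
`⟨σ(X|_{[0,t]}), w∘i⟩ = ∫_0^t ⟨σ(X|_{[0,r]}), w⟩ Ẋ^i_r dr`. -/
def sigRev (X : ℝ → Fin d → ℝ) : List (Fin d) → ℝ → ℝ
  | [], _ => 1
  | i :: w, t => ∫ r in (0:ℝ)..t, sigRev X w r * deriv (fun u => X u i) r

/-- `⟨σ(X|_{[0,L]}), w⟩`, the signature coefficient of the word `w`. -/
def sigWord (X : ℝ → Fin d → ℝ) (L : ℝ) (w : Word d) : ℝ := sigRev X w.reverse L

/-- The pairing `⟨σ(X|_{[0,L]}), x⟩` for `x ∈ T(ℝ^d)`. -/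
def sigT (X : ℝ → Fin d → ℝ) (L : ℝ) (x : Tens d) : ℝ :=
  x.sum fun w a => a * sigWord X L w

/-- The transformed path `p(X) : t ↦ p(X(t))`. -/
def pPath (p : PolyMap d m) (X : ℝ → Fin d → ℝ) : ℝ → Fin m → ℝ :=
  fun t i => MvPolynomial.eval (X t) (p i)

/-- The translated polynomial map `p̃(y) = p(y + x₀) − p(x₀)`, satisfying `p̃(0) = 0`. -/
def ptilde (p : PolyMap d m) (x0 : Fin d → ℝ) : PolyMap d m := fun i =>
  MvPolynomial.aeval (fun j => MvPolynomial.X j + MvPolynomial.C (x0 j)) (p i) -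
    MvPolynomial.C (MvPolynomial.eval x0 (p i))

/-- The pairing `⟨exp_∘(L·𝟙), x⟩` for `x ∈ T(ℝ¹)`: the coefficient of the word of
length `n` in `exp_∘(L·𝟙)` is `Lⁿ/n!`. -/
def expPair (L : ℝ) (x : Tens 1) : ℝ :=
  x.sum fun w a => a * (L ^ w.length / (w.length.factorial : ℝ))

/-- The pairing `⟨σ(X) ∘ σ(Y), x⟩` of the concatenation product of two signatures with
`x ∈ T(ℝ^d)`: on a word `w` it is `Σ_{u∘v = w} ⟨σ(X), u⟩·⟨σ(Y), v⟩`. -/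
def concatPair (X Y : ℝ → Fin d → ℝ) (L : ℝ) (x : Tens d) : ℝ :=
  x.sum fun w a =>
    a * ∑ k ∈ Finset.range (w.length + 1), sigWord X L (w.take k) * sigWord Y L (w.drop k)


/-! ### Auxiliary development -/

section AuxAnalysis

open Set intervalIntegral

variable {L : ℝ} {E : Set ℝ} {f g F G : ℝ → ℝ}

lemma const_of_derivAt_zero (hE : E.Countable) {h : ℝ → ℝ}
    (hc : ContinuousOn h (Set.Icc 0 L))
    (hd : ∀ r ∈ Set.Ioo 0 L \ E, HasDerivAt h 0 r) :
    ∀ t ∈ Set.Icc 0 L, h t = h 0 := by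
  intro t ht
  have := MeasureTheory.integral_eq_of_hasDerivAt_off_countable_of_le h (fun _ => (0:ℝ))
    ht.1 hE (hc.mono (Icc_subset_Icc le_rfl ht.2))
    (fun x hx => hd x ⟨⟨hx.1.1, lt_of_lt_of_le hx.1.2 ht.2⟩, hx.2⟩)
    intervalIntegrable_const
  simp at this
  linarith

/-- Regular integrands : interval integrable on `[0,L]` and continuous off a bad set. -/
def Reg (L : ℝ) (E : Set ℝ) (f : ℝ → ℝ) : Prop :=
  IntervalIntegrable f volume 0 L ∧ ∀ r ∈ Set.Ioo 0 L \ E, ContinuousAt f r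

/-- Good functions : continuous on `[0,L]`. -/
def Good (L : ℝ) (F : ℝ → ℝ) : Prop := ContinuousOn F (Set.Icc 0 L)

lemma Good.contAt (hF : Good L F) {r : ℝ} (hr : r ∈ Set.Ioo 0 L) : ContinuousAt F r :=
  hF.continuousAt (Icc_mem_nhds hr.1 hr.2)

lemma Good.mulG (hF : Good L F) (hG : Good L G) : Good L (fun r => F r * G r) :=
  hF.mul hG

lemma Good.mulReg (hL : 0 ≤ L) (hF : Good L F) (hf : Reg L E f) :
    Reg L E (fun r => F r * f r) := by
  refine ⟨hf.1.continuousOn_mul (by rwa [uIcc_of_le hL]), fun r hr => ?_⟩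
  exact (hF.contAt hr.1).mul (hf.2 r hr)

lemma Reg.add (hf : Reg L E f) (hg : Reg L E g) : Reg L E (fun r => f r + g r) :=
  ⟨hf.1.add hg.1, fun r hr => (hf.2 r hr).add (hg.2 r hr)⟩

lemma Reg.mono_set (hf : Reg L E f) {c : ℝ} (hc : c ∈ Set.Icc 0 L) :
    IntervalIntegrable f volume 0 c :=
  hf.1.mono_set
    (by rw [uIcc_of_le hc.1, uIcc_of_le (hc.1.trans hc.2)]; exact Icc_subset_Icc le_rfl hc.2)

lemma Reg.smaf (hL : 0 ≤ L) (hf : Reg L E f) {r : ℝ} (hr : r ∈ Set.Ioo 0 L) :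
    StronglyMeasurableAtFilter f (nhds r) := by
  refine ⟨Set.Ioo 0 L, Ioo_mem_nhds hr.1 hr.2, ?_⟩
  exact hf.1.1.aestronglyMeasurable.mono_measure
    (Measure.restrict_mono Ioo_subset_Ioc_self le_rfl)

lemma Reg.primitive_good (hL : 0 ≤ L) (hf : Reg L E f) :
    Good L (fun t => ∫ r in (0:ℝ)..t, f r) := by
  have := continuousOn_primitive_interval' hf.1 (by rw [uIcc_of_le hL]; exact ⟨le_rfl, hL⟩)
  rwa [uIcc_of_le hL] at this

lemma Reg.primitive_hasDerivAt (hL : 0 ≤ L) (hf : Reg L E f) {r : ℝ}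
    (hr : r ∈ Set.Ioo 0 L \ E) :
    HasDerivAt (fun t => ∫ x in (0:ℝ)..t, f x) (f r) r :=
  integral_hasDerivAt_right (hf.mono_set ⟨hr.1.1.le, hr.1.2.le⟩)
    (hf.smaf hL hr.1) (hf.2 r hr)

lemma prod_primitive (hL : 0 ≤ L) (hE : E.Countable) (hf : Reg L E f) (hg : Reg L E g) :
    ∀ t ∈ Set.Icc 0 L,
      (∫ r in (0:ℝ)..t, f r) * (∫ r in (0:ℝ)..t, g r) =
        ∫ r in (0:ℝ)..t, ((∫ x in (0:ℝ)..r, f x) * g r + f r * (∫ x in (0:ℝ)..r, g x)) := by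
  set F : ℝ → ℝ := fun t => ∫ r in (0:ℝ)..t, f r with hF
  set G : ℝ → ℝ := fun t => ∫ r in (0:ℝ)..t, g r with hG
  have hFg : Good L F := hf.primitive_good hL
  have hGg : Good L G := hg.primitive_good hL
  have hFgReg : Reg L E (fun r => F r * g r) := hFg.mulReg hL hg
  have hfGReg : Reg L E (fun r => f r * G r) := by
    have h2 := (hGg.mulReg hL hf).1
    refine ⟨by simpa [mul_comm] using h2, fun r hr => ((hf.2 r hr).mul (hGg.contAt hr.1))⟩
  have hsum : Reg L E (fun r => F r * g r + f r * G r) := hFgReg.add hfGReg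
  have key : ∀ t ∈ Set.Icc 0 L,
      (fun t => F t * G t - ∫ r in (0:ℝ)..t, (F r * g r + f r * G r)) t =
      (fun t => F t * G t - ∫ r in (0:ℝ)..t, (F r * g r + f r * G r)) 0 := by
    apply const_of_derivAt_zero hE
    · exact (hFg.mulG hGg).sub (hsum.primitive_good hL)
    · intro r hr
      have h1 : HasDerivAt F (f r) r := hf.primitive_hasDerivAt hL hr
      have h2 : HasDerivAt G (g r) r := hg.primitive_hasDerivAt hL hr
      have h3 : HasDerivAt (fun t => ∫ x in (0:ℝ)..t, (F x * g x + f x * G x))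
          (F r * g r + f r * G r) r := hsum.primitive_hasDerivAt hL hr
      have h4 := (h1.mul h2).sub h3
      rw [show f r * G r + F r * g r - (F r * g r + f r * G r) = 0 by ring] at h4
      exact h4
  intro t ht
  have h5 := key t ht
  simp only [intervalIntegral.integral_same] at h5
  have hF0 : F 0 = 0 := intervalIntegral.integral_same
  rw [hF0] at h5
  simp at h5
  linarith

variable {d : ℕ} {X : ℝ → Fin d → ℝ}

/-- All the facts we need about a piecewise-`C¹` path. -/
structure PathData (X : ℝ → Fin d → ℝ) (L : ℝ) (E : Set ℝ) : Prop where
  hL : 0 ≤ L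
  countable : E.Countable
  cont : ∀ j, ContinuousOn (fun u => X u j) (Set.Icc 0 L)
  hderiv : ∀ j, ∀ r ∈ Set.Ioo 0 L \ E,
    HasDerivAt (fun u => X u j) (deriv (fun u => X u j) r) r
  reg : ∀ j, Reg L E (deriv (fun u => X u j))

lemma piecewise_pathData (hX : PiecewiseC1 X L) : ∃ E : Set ℝ, PathData X L E := by
  obtain ⟨n, τ, hmono, h0, hlast, hC1⟩ := hX
  have hL : 0 ≤ L := by rw [← h0, ← hlast]; exact hmono (Fin.zero_le _)
  rcases Nat.eq_zero_or_pos n with hn | hn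
  · -- degenerate case : L = 0
    subst hn
    have hL0 : L = 0 := by rw [← hlast, ← h0]; rfl
    subst hL0
    refine ⟨{0}, le_rfl, Set.countable_singleton 0, fun j => ?_, fun j r hr => ?_, fun j => ?_⟩
    · rw [Set.Icc_self]; exact continuousOn_singleton _ _
    · exact absurd hr.1 (by simp)
    · exact ⟨IntervalIntegrable.refl, fun r hr => absurd hr.1 (by simp)⟩
  have hcover : ∀ r ∈ Set.Icc 0 L, ∃ k : Fin n, τ k.castSucc ≤ r ∧ r ≤ τ k.succ := by
    intro r hr
    classical
    set Φ := Finset.univ.filter (fun k : Fin (n+1) => τ k ≤ r) with hΦ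
    have hne : Φ.Nonempty := ⟨0, by simp [hΦ, h0, hr.1]⟩
    set k0 := Φ.max' hne with hk0
    have hk0mem : τ k0 ≤ r := (Finset.mem_filter.mp (Φ.max'_mem hne)).2
    by_cases hlt : (k0 : ℕ) < n
    · refine ⟨⟨(k0 : ℕ), hlt⟩, by simpa [Fin.castSucc] using hk0mem, ?_⟩
      by_contra hcon
      push_neg at hcon
      have hmem : (⟨(k0 : ℕ), hlt⟩ : Fin n).succ ∈ Φ := by
        rw [hΦ, Finset.mem_filter]
        exact ⟨Finset.mem_univ _, hcon.le⟩
      have hle := Φ.le_max' _ hmem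
      rw [← hk0] at hle
      have : (k0 : ℕ) + 1 ≤ (k0 : ℕ) := by
        simpa [Fin.le_def, Fin.succ] using hle
      omega
    · have hk0last : k0 = Fin.last n := by
        apply Fin.ext
        have := k0.isLt
        simp only [Fin.val_last]
        omega
      have hrL : r = L := le_antisymm hr.2 (by rw [← hlast, ← hk0last]; exact hk0mem)
      refine ⟨⟨n - 1, by omega⟩, ?_, ?_⟩
      · refine le_of_le_of_eq ?_ (hlast.trans hrL.symm)
        exact hmono (by simp [Fin.le_def])
      · refine le_of_eq_of_le (hrL.trans hlast.symm) ?_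
        apply le_of_eq
        congr 1
        apply Fin.ext
        simp [Fin.succ, Fin.val_last]
        omega
  refine ⟨Set.range τ, hL, Set.countable_range τ, ?_, ?_, ?_⟩
  · -- continuity
    intro j
    have hcont : ContinuousOn (fun u => X u j)
        (⋃ k : Fin n, Set.Icc (τ k.castSucc) (τ k.succ)) := by
      apply LocallyFinite.continuousOn_iUnion
      · exact locallyFinite_of_finite _
      · exact fun k => isClosed_Icc
      · intro k
        exact (ContinuousLinearMap.proj j : (Fin d → ℝ) →L[ℝ] ℝ).continuous.comp_continuousOn
          (hC1 k).continuousOn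
    apply hcont.mono
    intro r hr
    obtain ⟨k, h1, h2⟩ := hcover r hr
    exact Set.mem_iUnion.mpr ⟨k, h1, h2⟩
  · -- HasDerivAt off the breakpoints
    intro j r hr
    obtain ⟨k, h1, h2⟩ := hcover r ⟨hr.1.1.le, hr.1.2.le⟩
    have h1' : τ k.castSucc < r := lt_of_le_of_ne h1 (fun h => hr.2 ⟨k.castSucc, h⟩)
    have h2' : r < τ k.succ := lt_of_le_of_ne h2 (fun h => hr.2 ⟨k.succ, h.symm⟩)
    have hCj : ContDiffOn ℝ 1 (fun u => X u j) (Set.Icc (τ k.castSucc) (τ k.succ)) :=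
      (ContinuousLinearMap.proj j : (Fin d → ℝ) →L[ℝ] ℝ).contDiff.comp_contDiffOn (hC1 k)
    have hdiff : DifferentiableAt ℝ (fun u => X u j) r :=
      ((hCj.differentiableOn one_ne_zero) r ⟨h1'.le, h2'.le⟩).differentiableAt
        (Icc_mem_nhds h1' h2')
    exact hdiff.hasDerivAt
  · -- Reg
    intro j
    constructor
    · -- integrability by chaining over the pieces
      have hpiece : ∀ k : Fin n,
          IntervalIntegrable (deriv (fun u => X u j)) volume (τ k.castSucc) (τ k.succ) := by
        intro k
        have hab : τ k.castSucc ≤ τ k.succ := hmono (k.castSucc_le_succ)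
        rcases eq_or_lt_of_le hab with heq | hlt'
        · rw [← heq]
        · have hCj : ContDiffOn ℝ 1 (fun u => X u j) (Set.Icc (τ k.castSucc) (τ k.succ)) :=
            (ContinuousLinearMap.proj j : (Fin d → ℝ) →L[ℝ] ℝ).contDiff.comp_contDiffOn (hC1 k)
          set g := derivWithin (fun u => X u j) (Set.Icc (τ k.castSucc) (τ k.succ)) with hg
          have hgc : ContinuousOn g (Set.Icc (τ k.castSucc) (τ k.succ)) :=
            hCj.continuousOn_derivWithin (uniqueDiffOn_Icc hlt') le_rfl
          have hgint : IntegrableOn g (Set.Ioc (τ k.castSucc) (τ k.succ)) volume :=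
            (hgc.integrableOn_Icc).mono_set Ioc_subset_Icc_self
          have hae : deriv (fun u => X u j)
              =ᵐ[volume.restrict (Set.Ioc (τ k.castSucc) (τ k.succ))] g := by
            have hmem : ∀ᵐ x ∂volume.restrict (Set.Ioc (τ k.castSucc) (τ k.succ)),
                x ∈ Set.Ioc (τ k.castSucc) (τ k.succ) := ae_restrict_mem measurableSet_Ioc
            have hne' : ∀ᵐ x ∂volume.restrict (Set.Ioc (τ k.castSucc) (τ k.succ)),
                x ≠ τ k.succ := by
              apply ae_restrict_of_ae
              rw [ae_iff]
              simpa using measure_singleton (τ k.succ)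
            filter_upwards [hmem, hne'] with x hx hxne
            exact (derivWithin_of_mem_nhds
              (Icc_mem_nhds hx.1 (lt_of_le_of_ne hx.2 hxne))).symm
          rw [intervalIntegrable_iff_integrableOn_Ioc_of_le hab]
          exact hgint.congr_fun_ae hae.symm
      have hchain : ∀ i : Fin (n+1),
          IntervalIntegrable (deriv (fun u => X u j)) volume 0 (τ i) := by
        intro i
        induction i using Fin.induction with
        | zero => rw [h0]
        | succ k ih => exact ih.trans (hpiece k)
      have := hchain (Fin.last n)
      rwa [hlast] at this
    · -- continuity off breakpoints
      intro r hr
      obtain ⟨k, h1, h2⟩ := hcover r ⟨hr.1.1.le, hr.1.2.le⟩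
      have h1' : τ k.castSucc < r := lt_of_le_of_ne h1 (fun h => hr.2 ⟨k.castSucc, h⟩)
      have h2' : r < τ k.succ := lt_of_le_of_ne h2 (fun h => hr.2 ⟨k.succ, h.symm⟩)
      have hCj : ContDiffOn ℝ 1 (fun u => X u j) (Set.Icc (τ k.castSucc) (τ k.succ)) :=
        (ContinuousLinearMap.proj j : (Fin d → ℝ) →L[ℝ] ℝ).contDiff.comp_contDiffOn (hC1 k)
      set g := derivWithin (fun u => X u j) (Set.Icc (τ k.castSucc) (τ k.succ)) with hg
      have hgc : ContinuousAt g r :=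
        (hCj.continuousOn_derivWithin (uniqueDiffOn_Icc (h1'.trans h2')) le_rfl).continuousAt
          (Icc_mem_nhds h1' h2')
      apply hgc.congr
      apply Filter.eventuallyEq_of_mem (Ioo_mem_nhds h1' h2')
      intro y hy
      exact derivWithin_of_mem_nhds (Icc_mem_nhds hy.1 hy.2)

end AuxAnalysis


section AuxSig

open Set intervalIntegral

variable {d : ℕ} {L : ℝ} {E : Set ℝ} {X : ℝ → Fin d → ℝ}

/-! #### Linear-algebraic facts about `sigT` -/

lemma sigT_eq (x : Tens d) :
    sigT X L x = Finsupp.linearCombination ℝ (sigWord X L) x := by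
  simp [sigT, Finsupp.linearCombination_apply, smul_eq_mul]

lemma sigT_single (w : Word d) (a : ℝ) :
    sigT X L (Finsupp.single w a) = a * sigWord X L w := by
  simp [sigT_eq]

lemma sigT_add (x y : Tens d) : sigT X L (x + y) = sigT X L x + sigT X L y := by
  simp [sigT_eq]

lemma sigT_smul (c : ℝ) (x : Tens d) : sigT X L (c • x) = c * sigT X L x := by
  simp [sigT_eq]

lemma sigT_finset_sum {ι : Type*} (s : Finset ι) (f : ι → Tens d) :
    sigT X L (∑ i ∈ s, f i) = ∑ i ∈ s, sigT X L (f i) := by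
  simp [sigT_eq, map_sum]

lemma sigT_mapDomain (f : Word d → Word d) (x : Tens d) :
    sigT X L (Finsupp.mapDomain f x) = x.sum fun w a => a * sigWord X L (f w) := by
  rw [sigT_eq, Finsupp.linearCombination_mapDomain]
  simp [Finsupp.linearCombination_apply, smul_eq_mul, Function.comp]

lemma sigWord_nil (t : ℝ) : sigWord X t ([] : Word d) = 1 := by
  simp [sigWord, sigRev]

/-! #### Regularity of signature coefficients -/

lemma good_sigRev (hP : PathData X L E) (w : List (Fin d)) :
    Good L (sigRev X w) ∧ ∀ j, Reg L E (fun r => sigRev X w r * deriv (fun u => X u j) r) := by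
  induction w with
  | nil =>
      have h1 : Good L (sigRev X []) := by
        have : sigRev X [] = fun _ => (1:ℝ) := by funext t; simp [sigRev]
        rw [this]; exact continuousOn_const
      refine ⟨h1, fun j => h1.mulReg hP.hL (hP.reg j)⟩
  | cons i w ih =>
      have h1 : Good L (sigRev X (i :: w)) := by
        have : sigRev X (i :: w)
            = fun t => ∫ r in (0:ℝ)..t, sigRev X w r * deriv (fun u => X u i) r := by
          funext t; simp [sigRev]
        rw [this]
        exact (ih.2 i).primitive_good hP.hL
      exact ⟨h1, fun j => h1.mulReg hP.hL (hP.reg j)⟩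

lemma good_sigWordFun (hP : PathData X L E) (w : Word d) :
    Good L (fun t => sigWord X t w) :=
  (good_sigRev hP w.reverse).1

lemma reg_sigWord_mul_deriv (hP : PathData X L E) (w : Word d) (j : Fin d) :
    Reg L E (fun r => sigWord X r w * deriv (fun u => X u j) r) :=
  (good_sigRev hP w.reverse).2 j

lemma good_sigTFun (hP : PathData X L E) (x : Tens d) :
    Good L (fun r => sigT X r x) := by
  have h : (fun r => sigT X r x) = fun r => ∑ w ∈ x.support, x w * sigWord X r w := rfl
  rw [h]
  apply continuousOn_finset_sum
  intro w _
  exact continuousOn_const.mul (good_sigWordFun hP w)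

/-! #### The append/integral identity -/

lemma sigWord_concat_eq (w : Word d) (j : Fin d) (t : ℝ) :
    sigWord X t (w ++ [j]) = ∫ r in (0:ℝ)..t, sigWord X r w * deriv (fun u => X u j) r := by
  simp [sigWord, List.reverse_append, sigRev]

lemma sigT_appendLetter (hP : PathData X L E) (j : Fin d) (x : Tens d) {t : ℝ}
    (ht : t ∈ Set.Icc 0 L) :
    sigT X t (appendLetter j x)
      = ∫ r in (0:ℝ)..t, sigT X r x * deriv (fun u => X u j) r := by
  rw [appendLetter, sigT_mapDomain, Finsupp.sum]
  have h1 : ∀ w ∈ x.support, x w * sigWord X t (w ++ [j])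
      = ∫ r in (0:ℝ)..t, x w * (sigWord X r w * deriv (fun u => X u j) r) := by
    intro w _
    rw [sigWord_concat_eq, intervalIntegral.integral_const_mul]
  rw [Finset.sum_congr rfl h1, ← intervalIntegral.integral_finset_sum]
  · apply intervalIntegral.integral_congr
    intro r _
    show ∑ w ∈ x.support, x w * (sigWord X r w * deriv (fun u => X u j) r)
        = sigT X r x * deriv (fun u => X u j) r
    rw [show sigT X r x = ∑ w ∈ x.support, x w * sigWord X r w from rfl, Finset.sum_mul]
    simp [mul_assoc]
  · intro w _
    exact ((reg_sigWord_mul_deriv hP w j).mono_set ht).const_mul _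

end AuxSig


section AuxShuffle

open Set intervalIntegral

variable {d : ℕ} {L : ℝ} {E : Set ℝ} {X : ℝ → Fin d → ℝ}

lemma shuffleWord_nil_left (v : Word d) : shuffleWord ([] : Word d) v = Finsupp.single v 1 := by
  rw [shuffleWord]

lemma shuffleWord_nil_right (u : Word d) : shuffleWord u ([] : Word d) = Finsupp.single u 1 := by
  cases u with
  | nil => rw [shuffleWord]
  | cons a u =>
      rw [shuffleWord]
      simp

lemma shuffleWord_cons_cons (a b : Fin d) (u v : Word d) :
    shuffleWord (a :: u) (b :: v) =
      Finsupp.mapDomain (fun w => a :: w) (shuffleWord u (b :: v)) +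
      Finsupp.mapDomain (fun w => b :: w) (shuffleWord (a :: u) v) := by
  rw [shuffleWord]

lemma appendLetter_mapDomain_comm (a c : Fin d) (x : Tens d) :
    appendLetter a (Finsupp.mapDomain (fun w => c :: w) x)
      = Finsupp.mapDomain (fun w => c :: w) (appendLetter a x) := by
  rw [appendLetter, appendLetter, ← Finsupp.mapDomain_comp, ← Finsupp.mapDomain_comp]
  rfl

lemma appendLetter_add (a : Fin d) (x y : Tens d) :
    appendLetter a (x + y) = appendLetter a x + appendLetter a y :=
  Finsupp.mapDomain_add

lemma appendLetter_single (a : Fin d) (w : Word d) (r : ℝ) :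
    appendLetter a (Finsupp.single w r) = Finsupp.single (w ++ [a]) r :=
  Finsupp.mapDomain_single

lemma shuffleWord_concat_aux (a b : Fin d) : ∀ (n : ℕ) (u v : Word d),
    u.length + v.length = n →
    shuffleWord (u ++ [a]) (v ++ [b]) =
      appendLetter a (shuffleWord u (v ++ [b])) + appendLetter b (shuffleWord (u ++ [a]) v) := by
  intro n
  induction n using Nat.strong_induction_on with
  | _ n IH =>
  intro u v hn
  subst hn
  match u, v with
  | [], [] =>
      simp only [List.nil_append, shuffleWord_cons_cons, shuffleWord_nil_left,
        shuffleWord_nil_right, Finsupp.mapDomain_single, appendLetter_single,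
        List.singleton_append, List.cons_append]
      abel
  | c :: u', [] =>
      have hIH := IH (u'.length + 0) (by simp) u' [] rfl
      simp only [List.nil_append, List.cons_append] at hIH ⊢
      rw [shuffleWord_cons_cons c b (u' ++ [a]) [], shuffleWord_cons_cons c b u' [],
        shuffleWord_nil_right, shuffleWord_nil_right, hIH, shuffleWord_nil_right]
      simp only [Finsupp.mapDomain_add, Finsupp.mapDomain_single,
        appendLetter_add, appendLetter_single, appendLetter_mapDomain_comm]
      simp only [List.cons_append, List.append_assoc, List.singleton_append]
      abel
  | [], e :: v' =>
      have hIH := IH (0 + v'.length) (by simp) [] v' rfl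
      simp only [List.nil_append, List.cons_append] at hIH ⊢
      rw [shuffleWord_cons_cons a e [] (v' ++ [b]), shuffleWord_cons_cons a e [] v',
        shuffleWord_nil_left, shuffleWord_nil_left, hIH, shuffleWord_nil_left]
      simp only [Finsupp.mapDomain_add, Finsupp.mapDomain_single,
        appendLetter_add, appendLetter_single, appendLetter_mapDomain_comm]
      simp only [List.cons_append, List.append_assoc, List.singleton_append]
      abel
  | c :: u', e :: v' =>
      have hIH1 := IH (u'.length + (e :: v').length) (by simp) u' (e :: v') rfl
      have hIH2 := IH ((c :: u').length + v'.length) (by simp) (c :: u') v' rfl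
      simp only [List.cons_append] at hIH1 hIH2 ⊢
      rw [shuffleWord_cons_cons c e (u' ++ [a]) (v' ++ [b]),
        shuffleWord_cons_cons c e u' (v' ++ [b]),
        shuffleWord_cons_cons c e (u' ++ [a]) v',
        hIH1, hIH2]
      simp only [Finsupp.mapDomain_add, appendLetter_add, appendLetter_mapDomain_comm]
      abel

lemma shuffleWord_concat (a b : Fin d) (u v : Word d) :
    shuffleWord (u ++ [a]) (v ++ [b]) =
      appendLetter a (shuffleWord u (v ++ [b])) + appendLetter b (shuffleWord (u ++ [a]) v) :=
  shuffleWord_concat_aux a b _ u v rfl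

/-- The shuffle identity, on pairs of words. -/
lemma sigT_shuffleWord_aux (hP : PathData X L E) : ∀ (n : ℕ) (u v : Word d),
    u.length + v.length = n →
    ∀ t ∈ Set.Icc 0 L, sigT X t (shuffleWord u v) = sigWord X t u * sigWord X t v := by
  intro n
  induction n using Nat.strong_induction_on with
  | _ n IH =>
  intro u v hn
  subst hn
  intro t ht
  rcases List.eq_nil_or_concat' u with rfl | ⟨u', a, rfl⟩
  · rw [shuffleWord_nil_left, sigT_single, sigWord_nil]
  rcases List.eq_nil_or_concat' v with rfl | ⟨v', b, rfl⟩
  · rw [shuffleWord_nil_right, sigT_single, sigWord_nil]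
    ring
  have htIcc : Set.uIcc (0:ℝ) t ⊆ Set.Icc 0 L := by
    rw [Set.uIcc_of_le ht.1]
    exact Set.Icc_subset_Icc le_rfl ht.2
  -- integrability facts
  have ia : IntervalIntegrable
      (fun r => (sigWord X r u' * sigWord X r (v' ++ [b])) * deriv (fun x => X x a) r)
      MeasureTheory.volume 0 t :=
    (((good_sigWordFun hP u').mulG (good_sigWordFun hP (v' ++ [b]))).mulReg hP.hL
      (hP.reg a)).mono_set ht
  have ib : IntervalIntegrable
      (fun r => (sigWord X r (u' ++ [a]) * sigWord X r v') * deriv (fun x => X x b) r)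
      MeasureTheory.volume 0 t :=
    (((good_sigWordFun hP (u' ++ [a])).mulG (good_sigWordFun hP v')).mulReg hP.hL
      (hP.reg b)).mono_set ht
  rw [shuffleWord_concat, sigT_add, sigT_appendLetter hP a _ ht, sigT_appendLetter hP b _ ht]
  have e1 : Set.EqOn
      (fun r => sigT X r (shuffleWord u' (v' ++ [b])) * deriv (fun x => X x a) r)
      (fun r => (sigWord X r u' * sigWord X r (v' ++ [b])) * deriv (fun x => X x a) r)
      (Set.uIcc 0 t) := by
    intro r hr
    have := IH (u'.length + (v' ++ [b]).length) (by simp) u' (v' ++ [b]) rfl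
      r (htIcc hr)
    simp only [this]
  have e2 : Set.EqOn
      (fun r => sigT X r (shuffleWord (u' ++ [a]) v') * deriv (fun x => X x b) r)
      (fun r => (sigWord X r (u' ++ [a]) * sigWord X r v') * deriv (fun x => X x b) r)
      (Set.uIcc 0 t) := by
    intro r hr
    have := IH ((u' ++ [a]).length + v'.length) (by simp) (u' ++ [a]) v' rfl
      r (htIcc hr)
    simp only [this]
  rw [intervalIntegral.integral_congr e1, intervalIntegral.integral_congr e2]
  -- now the right-hand side
  have hprod := prod_primitive hP.hL hP.countable
    (reg_sigWord_mul_deriv hP u' a) (reg_sigWord_mul_deriv hP v' b) t ht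
  rw [sigWord_concat_eq u' a t, sigWord_concat_eq v' b t, hprod]
  rw [← intervalIntegral.integral_add ia ib]
  apply intervalIntegral.integral_congr
  intro r _
  simp only [← sigWord_concat_eq]
  ring

/-- The shuffle identity, on pairs of words (clean form). -/
lemma sigT_shuffleWord (hP : PathData X L E) (u v : Word d) {t : ℝ} (ht : t ∈ Set.Icc 0 L) :
    sigT X t (shuffleWord u v) = sigWord X t u * sigWord X t v :=
  sigT_shuffleWord_aux hP _ u v rfl t ht

/-- The shuffle identity, bilinear version. -/
lemma sigT_shuffle (hP : PathData X L E) (x y : Tens d) {t : ℝ} (ht : t ∈ Set.Icc 0 L) :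
    sigT X t (shuffle x y) = sigT X t x * sigT X t y := by
  rw [shuffle, sigT_eq, map_finsuppSum]
  have h1 : ∀ u ∈ x.support, (Finsupp.linearCombination ℝ (sigWord X t))
      (y.sum fun v b => (x u * b) • shuffleWord u v)
      = x u * sigWord X t u * sigT X t y := by
    intro u _
    rw [map_finsuppSum]
    have h2 : ∀ v ∈ y.support, (Finsupp.linearCombination ℝ (sigWord X t))
        ((x u * y v) • shuffleWord u v)
        = (x u * sigWord X t u) * (y v * sigWord X t v) := by
      intro v _
      rw [LinearMap.map_smul, smul_eq_mul, ← sigT_eq, sigT_shuffleWord hP u v ht]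
      ring
    rw [Finsupp.sum_congr
      (g2 := fun v b => (x u * sigWord X t u) * (b * sigWord X t v)) h2,
      ← Finsupp.mul_sum]
    rfl
  rw [Finsupp.sum_congr (g2 := fun u a => a * sigWord X t u * sigT X t y) h1,
    show sigT X t x = x.sum fun w a => a * sigWord X t w from rfl, Finsupp.sum_mul]

end AuxShuffle


section AuxPhi

open Set intervalIntegral MvPolynomial

variable {d : ℕ} {L : ℝ} {E : Set ℝ} {X : ℝ → Fin d → ℝ}

lemma sigT_empty (t : ℝ) : sigT X t (Finsupp.single ([] : Word d) 1) = 1 := by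
  rw [sigT_single, sigWord_nil, one_mul]

lemma ftc_X (hP : PathData X L E) (j : Fin d) {t : ℝ} (ht : t ∈ Set.Icc 0 L) :
    ∫ r in (0:ℝ)..t, deriv (fun u => X u j) r = X t j - X 0 j :=
  MeasureTheory.integral_eq_of_hasDerivAt_off_countable_of_le (fun u => X u j)
    (deriv (fun u => X u j)) ht.1 hP.countable
    ((hP.cont j).mono (Icc_subset_Icc le_rfl ht.2))
    (fun x hx => hP.hderiv j x ⟨⟨hx.1.1, lt_of_lt_of_le hx.1.2 ht.2⟩, hx.2⟩)
    ((hP.reg j).mono_set ht)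

lemma sigT_letterT (hP : PathData X L E) (i : Fin d) {t : ℝ} (ht : t ∈ Set.Icc 0 L) :
    sigT X t (letterT i) = X t i - X 0 i := by
  rw [letterT, sigT_single, one_mul]
  have h1 : sigWord X t [i]
      = ∫ r in (0:ℝ)..t, sigRev X [] r * deriv (fun u => X u i) r := by
    simp [sigWord, sigRev]
  rw [h1]
  have h2 : Set.EqOn (fun r => sigRev X [] r * deriv (fun u => X u i) r)
      (fun r => deriv (fun u => X u i) r) (Set.uIcc 0 t) := by
    intro r _
    simp [sigRev]
  rw [intervalIntegral.integral_congr h2, ftc_X hP i ht]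

lemma sigT_shufflePow (hP : PathData X L E) (x : Tens d) (n : ℕ) {t : ℝ}
    (ht : t ∈ Set.Icc 0 L) :
    sigT X t (shufflePow x n) = (sigT X t x) ^ n := by
  induction n with
  | zero => rw [shufflePow, pow_zero]; exact sigT_empty t
  | succ n ih => rw [shufflePow, sigT_shuffle hP _ _ ht, ih, pow_succ]

lemma sigT_shuffleList (hP : PathData X L E) (l : List (Tens d)) {t : ℝ}
    (ht : t ∈ Set.Icc 0 L) :
    sigT X t (shuffleList l) = (l.map fun y => sigT X t y).prod := by
  induction l with
  | nil => rw [shuffleList, List.map_nil, List.prod_nil]; exact sigT_empty t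
  | cons y l ih => rw [shuffleList, sigT_shuffle hP _ _ ht, ih, List.map_cons, List.prod_cons]

lemma sigT_phiMon (hP : PathData X L E) (τ : Fin d →₀ ℕ) {t : ℝ} (ht : t ∈ Set.Icc 0 L) :
    sigT X t (phiMon τ) = ∏ i : Fin d, (X t i - X 0 i) ^ τ i := by
  rw [phiMon, sigT_shuffleList hP _ ht, List.map_map, Fin.prod_univ_def]
  congr 1
  apply List.map_congr_left
  intro i _
  simp only [Function.comp_apply]
  rw [sigT_shufflePow hP _ _ ht, sigT_letterT hP i ht]

lemma sigT_phi (hP : PathData X L E) (f : MvPolynomial (Fin d) ℝ) {t : ℝ}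
    (ht : t ∈ Set.Icc 0 L) :
    sigT X t (phi f) = MvPolynomial.eval (fun j => X t j - X 0 j) f := by
  rw [phi, sigT_finset_sum, MvPolynomial.eval_eq']
  apply Finset.sum_congr rfl
  intro τ _
  rw [sigT_smul, sigT_phiMon hP τ ht]

/-! #### Chain rule for polynomials along a differentiable path -/

lemma hasDerivAt_eval_poly (q : MvPolynomial (Fin d) ℝ) {Y : ℝ → Fin d → ℝ}
    {Y' : Fin d → ℝ} {r : ℝ} (hY : ∀ j, HasDerivAt (fun u => Y u j) (Y' j) r) :
    HasDerivAt (fun u => MvPolynomial.eval (Y u) q)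
      (∑ j : Fin d, MvPolynomial.eval (Y r) (MvPolynomial.pderiv j q) * Y' j) r := by
  induction q using MvPolynomial.induction_on with
  | C a =>
      have : (fun u => MvPolynomial.eval (Y u) (C a : MvPolynomial (Fin d) ℝ))
          = fun _ => a := by funext u; simp
      rw [this]
      simpa using hasDerivAt_const r a
  | add p q hp hq =>
      have h : HasDerivAt (fun u => MvPolynomial.eval (Y u) p + MvPolynomial.eval (Y u) q) _ r :=
        hp.add hq
      have e1 : (fun u => MvPolynomial.eval (Y u) p + MvPolynomial.eval (Y u) q)
          = fun u => MvPolynomial.eval (Y u) (p + q) := by funext u; simp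
      rw [e1] at h
      convert h using 1
      simp [Finset.sum_add_distrib, add_mul]
  | mul_X p i hp =>
      have h : HasDerivAt (fun u => MvPolynomial.eval (Y u) p * Y u i) _ r :=
        hp.mul (hY i)
      have e1 : (fun u => MvPolynomial.eval (Y u) p * Y u i)
          = fun u => MvPolynomial.eval (Y u) (p * X i) := by funext u; simp
      rw [e1] at h
      convert h using 1
      classical
      have e2 : ∀ j : Fin d, MvPolynomial.eval (Y r) (MvPolynomial.pderiv j (p * X i)) * Y' j
          = MvPolynomial.eval (Y r) (MvPolynomial.pderiv j p) * Y' j * Y r i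
            + (if i = j then MvPolynomial.eval (Y r) p * Y' j else 0) := by
        intro j
        rw [MvPolynomial.pderiv_mul, MvPolynomial.pderiv_X]
        rcases eq_or_ne i j with rfl | hij
        · simp [Pi.single_apply]
          ring
        · simp [Pi.single_apply, Ne.symm hij, hij]
          ring
      rw [Finset.sum_congr rfl (fun j _ => e2 j), Finset.sum_add_distrib,
        ← Finset.sum_mul, Finset.sum_ite_eq Finset.univ i
          (fun j => MvPolynomial.eval (Y r) p * Y' j)]
      simp [mul_comm]

/-! #### Evaluation of the shifted polynomials -/

lemma eval_aeval_poly (g : Fin d → MvPolynomial (Fin d) ℝ) (y : Fin d → ℝ)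
    (f : MvPolynomial (Fin d) ℝ) :
    MvPolynomial.eval y (MvPolynomial.aeval g f)
      = MvPolynomial.eval (fun j => MvPolynomial.eval y (g j)) f := by
  induction f using MvPolynomial.induction_on with
  | C a => simp
  | add p q hp hq => simp only [map_add, hp, hq]
  | mul_X p i hp => simp only [map_mul, MvPolynomial.aeval_X, MvPolynomial.eval_mul, hp,
      MvPolynomial.eval_X]

lemma eval_ptilde {m : ℕ} (p : PolyMap d m) (x0 y : Fin d → ℝ) (i : Fin m) :
    MvPolynomial.eval y (ptilde p x0 i)
      = MvPolynomial.eval (fun j => y j + x0 j) (p i) - MvPolynomial.eval x0 (p i) := by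
  rw [ptilde]
  simp only [map_sub, MvPolynomial.eval_C]
  rw [eval_aeval_poly]
  simp

end AuxPhi


section AuxFinal

open Set intervalIntegral MeasureTheory

variable {d : ℕ} {L : ℝ} {E : Set ℝ} {X : ℝ → Fin d → ℝ}

lemma sum_pderiv_deriv_zero {m : ℕ} (hP : PathData X L E) (p : PolyMap d m)
    (hzero : ∀ i : Fin m, ∀ t ∈ Set.Icc (0:ℝ) L, MvPolynomial.eval (X t) (p i) = 0)
    (i : Fin m) {r : ℝ} (hr : r ∈ Set.Ioo 0 L \ E) :
    ∑ j : Fin d, MvPolynomial.eval (fun j' => X r j' - X 0 j')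
        (MvPolynomial.pderiv j (ptilde p (X 0) i)) * deriv (fun u => X u j) r = 0 := by
  have hY : ∀ j, HasDerivAt (fun u => X u j - X 0 j) (deriv (fun u => X u j) r) r :=
    fun j => (hP.hderiv j r hr).sub_const _
  have hD := hasDerivAt_eval_poly (ptilde p (X 0) i) (Y := fun u j => X u j - X 0 j) hY
  have hzero' : ∀ u ∈ Set.Ioo (0:ℝ) L,
      MvPolynomial.eval (fun j => X u j - X 0 j) (ptilde p (X 0) i) = 0 := by
    intro u hu
    rw [eval_ptilde]
    have e1 : (fun j => X u j - X 0 j + X 0 j) = X u := by funext j; ring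
    rw [e1, hzero i u ⟨hu.1.le, hu.2.le⟩, hzero i 0 ⟨le_rfl, hP.hL⟩, sub_zero]
  have hev : (fun u => MvPolynomial.eval (fun j => X u j - X 0 j) (ptilde p (X 0) i))
      =ᶠ[nhds r] fun _ => 0 :=
    Filter.eventually_of_mem (Ioo_mem_nhds hr.1.1 hr.1.2) hzero'
  have h0 : HasDerivAt (fun u => MvPolynomial.eval (fun j => X u j - X 0 j) (ptilde p (X 0) i))
      0 r := (hasDerivAt_const r (0:ℝ)).congr_of_eventuallyEq hev
  exact hD.unique h0

end AuxFinal


/-- If the piecewise continuously differentiable path `X : [0,L] → ℝ^d`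
lies in the zero set of the ideal `I_p = ⟨p₁,…,p_m⟩`, then with
`p̃(y) = p(y + X(0)) − p(X(0))` one has `M_{p̃}^*(σ(X)) = e`: `⟨σ(X), M_{p̃}(w)⟩ = 0` for
every non-empty word `w` and `⟨σ(X), M_{p̃}(e)⟩ = 1`. -/
theorem signature_vanishing_on_variety (d m : ℕ) (L : ℝ)
    (X : ℝ → Fin d → ℝ) (hX : PiecewiseC1 X L) (p : PolyMap d m)
    (hzero : ∀ i : Fin m, ∀ t ∈ Set.Icc (0 : ℝ) L, MvPolynomial.eval (X t) (p i) = 0) :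
    (∀ w : Word m, w ≠ [] → sigT X L (MpWord (ptilde p (X 0)) w) = 0) ∧
    sigT X L (MpWord (ptilde p (X 0)) ([] : Word m)) = 1 := by
  obtain ⟨E, hP⟩ := piecewise_pathData hX
  constructor
  · intro w hw
    rw [MpWord]
    cases hrev : w.reverse with
    | nil => exact absurd (List.reverse_eq_nil_iff.mp hrev) hw
    | cons i u =>
      rw [MpRev]
      rw [sigT_finset_sum]
      have hL' : L ∈ Set.Icc (0:ℝ) L := ⟨hP.hL, le_rfl⟩
      have happ : ∀ j : Fin d,
          sigT X L (appendLetter j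
            (shuffle (MpRev (ptilde p (X 0)) u) (kP (ptilde p (X 0)) i j)))
          = ∫ r in (0:ℝ)..L,
              sigT X r (shuffle (MpRev (ptilde p (X 0)) u) (kP (ptilde p (X 0)) i j))
                * deriv (fun x => X x j) r :=
        fun j => sigT_appendLetter hP j _ hL'
      rw [Finset.sum_congr rfl (fun j _ => happ j)]
      rw [← intervalIntegral.integral_finset_sum]
      · have hae : ∀ᵐ r ∂(MeasureTheory.volume : MeasureTheory.Measure ℝ),
            r ∈ Set.uIoc (0:ℝ) L →
            (∑ j : Fin d,
              sigT X r (shuffle (MpRev (ptilde p (X 0)) u) (kP (ptilde p (X 0)) i j))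
                * deriv (fun x => X x j) r) = (fun _ : ℝ => (0:ℝ)) r := by
          have h1 : ∀ᵐ r ∂(MeasureTheory.volume : MeasureTheory.Measure ℝ), r ∉ E := by
            rw [MeasureTheory.ae_iff]
            simpa [Classical.not_not] using hP.countable.measure_zero
              (MeasureTheory.volume : MeasureTheory.Measure ℝ)
          have h2 : ∀ᵐ r ∂(MeasureTheory.volume : MeasureTheory.Measure ℝ), r ≠ L := by
            rw [MeasureTheory.ae_iff]
            simpa [Classical.not_not] using MeasureTheory.measure_singleton (L : ℝ)
          filter_upwards [h1, h2] with r hrE hrL hrmem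
          rw [Set.uIoc_of_le hP.hL] at hrmem
          have hrIoo : r ∈ Set.Ioo 0 L \ E := ⟨⟨hrmem.1, lt_of_le_of_ne hrmem.2 hrL⟩, hrE⟩
          have hrIcc : r ∈ Set.Icc (0:ℝ) L := ⟨hrIoo.1.1.le, hrIoo.1.2.le⟩
          have e3 : ∀ j : Fin d,
              sigT X r (shuffle (MpRev (ptilde p (X 0)) u) (kP (ptilde p (X 0)) i j))
                * deriv (fun x => X x j) r
              = sigT X r (MpRev (ptilde p (X 0)) u)
                * (MvPolynomial.eval (fun j' => X r j' - X 0 j')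
                    (MvPolynomial.pderiv j (ptilde p (X 0) i)) * deriv (fun x => X x j) r) := by
            intro j
            rw [sigT_shuffle hP _ _ hrIcc, kP, sigT_phi hP _ hrIcc]
            ring
          rw [Finset.sum_congr rfl (fun j _ => e3 j), ← Finset.mul_sum,
            sum_pderiv_deriv_zero hP p hzero i hrIoo, mul_zero]
        rw [intervalIntegral.integral_congr_ae hae]
        simp
      · intro j _
        exact ((good_sigTFun hP _).mulReg hP.hL (hP.reg j)).1
  · rw [MpWord, List.reverse_nil, MpRev]
    exact sigT_empty L


end SigPaper
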